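/- The associahedron term set K_4, consisting of the faces (p, q) in the Saneblidze–Umble diagonal term set Δ_4 with both p and q derived consecutive, has exactly 22 elements. -/

import Mathlib

/-- Split a list into maximal runs with respect to the relation `r`. -/
def splitRuns {α : Type*} (r : α → α → Bool) : List α → List (List α)
  | [] => []
  | [x] => [[x]]
  | x :: y :: rest =>
    match splitRuns r (y :: rest) with
    | [] => [[x]]
    | s :: ss => if r x y then (x :: s) :: ss else [x] :: s :: ss

/-- The word `σ(1) σ(2) … σ(n)` of a permutation of `{1,…,n}`. -/
def permWord (n : ℕ) (σ : Equiv.Perm (Fin n)) : List ℕ :=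
  List.ofFn (fun i => (σ i : ℕ) + 1)

/-- A face: a pair of ordered partitions, each a list of blocks. -/
abbrev Face := List (Finset ℕ) × List (Finset ℕ)

/-- The step matrix face of a permutation: the maximal decreasing runs of its word
(as sets, in order of occurrence) paired with the maximal increasing runs. -/
def stepFace (n : ℕ) (σ : Equiv.Perm (Fin n)) : Face :=
  ((splitRuns (fun a b => decide (b < a)) (permWord n σ)).map List.toFinset,
   (splitRuns (fun a b => decide (a < b)) (permWord n σ)).map List.toFinset)

/-- `π` is an ordered partition of `{1,…,n}`: a finite sequence of nonempty pairwise
disjoint subsets whose union is `{1,…,n}`. -/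
def IsOrderedPartition (n : ℕ) (π : List (Finset ℕ)) : Prop :=
  (∀ b ∈ π, b.Nonempty) ∧ π.Pairwise Disjoint ∧ π.foldr (· ∪ ·) ∅ = Finset.Icc 1 n

/-- The `M`-shift at (0-based) index `j`: remove `M` from block `j` and adjoin it to
block `j+1`. -/
def blockShift (π : List (Finset ℕ)) (j : ℕ) (M : Finset ℕ) : List (Finset ℕ) :=
  (π.set j (π.getD j ∅ \ M)).set (j + 1) (π.getD (j + 1) ∅ ∪ M)

/-- `M` is an admissible subset of the `j`-th block of `π` with respect to `μ`:
`M` is a nonempty proper subset of `π_j` (with `j` not the last index),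
`min M > max π_{j+1}`, and if `min M ∈ μ_{k₀}` then `π_{j+1}` is disjoint from
`μ_{k₀} ∪ … ∪ μ_r`. -/
def Admissible (π μ : List (Finset ℕ)) (j : ℕ) (M : Finset ℕ) : Prop :=
  j + 1 < π.length ∧ M.Nonempty ∧ M ⊂ π.getD j ∅ ∧
    (∀ x ∈ M, ∀ y ∈ π.getD (j + 1) ∅, y < x) ∧
    ∃ k₀ < μ.length,
      (∃ m ∈ M, (∀ x ∈ M, m ≤ x) ∧ m ∈ μ.getD k₀ ∅) ∧
      ∀ i, k₀ ≤ i → i < μ.length → π.getD (j + 1) ∅ ∩ μ.getD i ∅ = ∅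

/-- A right shift of a face at index `j`: an admissible `M`-shift on the first
partition, admissibility taken with respect to the reverse of the second. -/
def RightShift (f g : Face) (j : ℕ) : Prop :=
  ∃ M, Admissible f.1 f.2.reverse j M ∧ g = (blockShift f.1 j M, f.2)

/-- A down shift of a face at index `j`: an admissible `M`-shift on the reverse of
the second partition, admissibility taken with respect to the first. -/
def DownShift (f g : Face) (j : ℕ) : Prop :=
  ∃ M, Admissible f.2.reverse f.1 j M ∧ g = (f.1, (blockShift f.2.reverse j M).reverse)

/-- A sequence of shifts of the given kind, performed at strictly increasing indices,
all of which are at least `i`. -/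
inductive ShiftSeq (step : Face → Face → ℕ → Prop) : ℕ → Face → Face → Prop
  | refl (i : ℕ) (f : Face) : ShiftSeq step i f f
  | cons (i j : ℕ) (f g h : Face) : i ≤ j → step f g j →
      ShiftSeq step (j + 1) g h → ShiftSeq step i f h

/-- `g` is a derived face of `f`: obtained by a sequence of right shifts at strictly
increasing indices followed by a sequence of down shifts at strictly increasing
indices. -/
def IsDerivedFace (f g : Face) : Prop :=
  ∃ m : Face, ShiftSeq RightShift 0 f m ∧ ShiftSeq DownShift 0 m g

/-- The Saneblidze–Umble diagonal term set `Δ_n`: all derived faces of step matrix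
faces of permutations of `{1,…,n}`. -/
def SUDiagonal (n : ℕ) : Set Face :=
  {f | ∃ σ : Equiv.Perm (Fin n), IsDerivedFace (stepFace n σ) f}

/-- An ordered partition is derived consecutive if for each `j`, the integer interval
`[min π_j, max π_j]` is contained in `π_1 ∪ … ∪ π_j`. -/
def DerivedConsecutive (π : List (Finset ℕ)) : Prop :=
  ∀ j < π.length, ∀ x : ℕ,
    (∃ a ∈ π.getD j ∅, a ≤ x) → (∃ b ∈ π.getD j ∅, x ≤ b) →
    x ∈ (π.take (j + 1)).foldr (· ∪ ·) ∅

/-- The associahedron term set `K_n`: the faces of `Δ_n` in which both ordered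
partitions are derived consecutive. -/
def AssocTerms (n : ℕ) : Set Face :=
  {f ∈ SUDiagonal n | DerivedConsecutive f.1 ∧ DerivedConsecutive f.2}


/-! ### Auxiliary machinery for the computation -/

section Aux

instance admissibleDec (π μ : List (Finset ℕ)) (j : ℕ) (M : Finset ℕ) :
    Decidable (Admissible π μ j M) :=
  @decidable_of_iff _ (j + 1 < π.length ∧ M.Nonempty ∧ M ⊂ π.getD j ∅ ∧
    (∀ x ∈ M, ∀ y ∈ π.getD (j + 1) ∅, y < x) ∧
    ∃ k₀ < μ.length,
      (∃ m ∈ M, (∀ x ∈ M, m ≤ x) ∧ m ∈ μ.getD k₀ ∅) ∧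
      ∀ i < μ.length, k₀ ≤ i → π.getD (j + 1) ∅ ∩ μ.getD i ∅ = ∅) (by
    unfold Admissible
    refine and_congr Iff.rfl (and_congr Iff.rfl (and_congr Iff.rfl (and_congr Iff.rfl ?_)))
    constructor
    · rintro ⟨k, hk, h1, h2⟩; exact ⟨k, hk, h1, fun i h1' h2' => h2 i h2' h1'⟩
    · rintro ⟨k, hk, h1, h2⟩; exact ⟨k, hk, h1, fun i h1' h2' => h2 i h2' h1'⟩) (by infer_instance)

/-- All subsets of `s`, provided `s ⊆ {0,…,4}`. -/
def subsetsList (s : Finset ℕ) : List (Finset ℕ) :=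
  ((List.range 5).filter (· ∈ s)).sublists.map List.toFinset

def rightNexts (f : Face) (j : ℕ) : List Face :=
  ((subsetsList (f.1.getD j ∅)).filter fun M => decide (Admissible f.1 f.2.reverse j M)).map
    fun M => (blockShift f.1 j M, f.2)

def downNexts (f : Face) (j : ℕ) : List Face :=
  ((subsetsList (f.2.reverse.getD j ∅)).filter
      fun M => decide (Admissible f.2.reverse f.1 j M)).map
    fun M => (f.1, (blockShift f.2.reverse j M).reverse)

def clo (nexts : Face → ℕ → List Face) : ℕ → ℕ → Face → List Face
  | 0, _, f => [f]
  | fuel + 1, i, f => (nexts f i).flatMap (clo nexts fuel (i + 1)) ++ clo nexts fuel (i + 1) f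

def derivedList (f : Face) : List Face :=
  (clo rightNexts 4 0 f).flatMap (clo downNexts 4 0)

/-- Bounded version of `DerivedConsecutive`. -/
def DC5 (π : List (Finset ℕ)) : Prop :=
  ∀ j < π.length, ∀ x < 5,
    (∃ a ∈ π.getD j ∅, a ≤ x) → (∃ b ∈ π.getD j ∅, x ≤ b) →
    x ∈ (π.take (j + 1)).foldr (· ∪ ·) ∅

instance (π) : Decidable (DC5 π) := by unfold DC5; infer_instance

/-- All entries of all blocks are `< 5`. -/
def Bdd (π : List (Finset ℕ)) : Prop := ∀ b ∈ π, ∀ a ∈ b, a < 5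

instance (π) : Decidable (Bdd π) := by unfold Bdd; infer_instance

def wordFace (w : List ℕ) : Face :=
  ((splitRuns (fun a b => decide (b < a)) w).map List.toFinset,
   (splitRuns (fun a b => decide (a < b)) w).map List.toFinset)

theorem stepFace_eq_wordFace (σ : Equiv.Perm (Fin 4)) :
    stepFace 4 σ = wordFace (permWord 4 σ) := rfl

theorem getD_mem {α : Type*} : ∀ (l : List α) (j : ℕ) (d : α), j < l.length → l.getD j d ∈ l
  | a :: _, 0, _, _ => List.mem_cons_self
  | _ :: l, j + 1, d, h =>
    List.mem_cons_of_mem _ (getD_mem l j d (by simpa using h))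

theorem mem_subsetsList {M s : Finset ℕ} (hMs : M ⊆ s) (hs : ∀ a ∈ s, a < 5) :
    M ∈ subsetsList s := by
  refine List.mem_map.2 ⟨(List.range 5).filter (· ∈ M), List.mem_sublists.2 ?_, ?_⟩
  · exact List.monotone_filter_right _ (by
      intro a ha
      simpa using hMs (by simpa using ha))
  · ext x
    simp only [List.mem_toFinset, List.mem_filter, List.mem_range, decide_eq_true_eq]
    exact ⟨fun h => h.2, fun h => ⟨hs _ (hMs h), h⟩⟩

/-- The predicates shared by all faces along a derivation. -/
def FaceInv (f : Face) : Prop :=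
  Bdd f.1 ∧ Bdd f.2 ∧ f.1.length ≤ 4 ∧ f.2.length ≤ 4

instance (f : Face) : Decidable (FaceInv f) := by unfold FaceInv; infer_instance

theorem bdd_blockShift {π : List (Finset ℕ)} {j : ℕ} {M : Finset ℕ}
    (hπ : Bdd π) (hM : ∀ a ∈ M, a < 5) : Bdd (blockShift π j M) := by
  have hD : ∀ (k : ℕ), ∀ a ∈ π.getD k ∅, a < 5 := by
    intro k a ha
    by_cases hk : k < π.length
    · exact hπ _ (getD_mem _ _ _ hk) a ha
    · rw [List.getD_eq_default _ _ (not_lt.1 hk)] at ha; simp at ha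
  intro b hb a ha
  rcases List.mem_or_eq_of_mem_set hb with hb | rfl
  · rcases List.mem_or_eq_of_mem_set hb with hb | rfl
    · exact hπ _ hb a ha
    · exact hD j a (Finset.mem_sdiff.1 ha).1
  · rcases Finset.mem_union.1 ha with h | h
    · exact hD _ a h
    · exact hM a h

theorem RightShift.inv {f g : Face} {j : ℕ} (h : RightShift f g j) (hf : FaceInv f) :
    FaceInv g ∧ g.2 = f.2 := by
  obtain ⟨M, hM, rfl⟩ := h
  obtain ⟨hlt, _, hsub, _⟩ := hM
  have hM5 : ∀ a ∈ M, a < 5 := by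
    intro a ha
    exact hf.1 _ (getD_mem _ _ _ (by omega)) a (hsub.subset ha)
  refine ⟨⟨bdd_blockShift hf.1 hM5, hf.2.1, ?_, hf.2.2.2⟩, rfl⟩
  simpa [blockShift] using hf.2.2.1

theorem DownShift.inv {f g : Face} {j : ℕ} (h : DownShift f g j) (hf : FaceInv f) :
    FaceInv g ∧ g.1 = f.1 := by
  obtain ⟨M, hM, rfl⟩ := h
  obtain ⟨hlt, _, hsub, _⟩ := hM
  have hbr : Bdd f.2.reverse := by intro b hb; exact hf.2.1 b (List.mem_reverse.1 hb)
  have hM5 : ∀ a ∈ M, a < 5 := by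
    intro a ha
    exact hbr _ (getD_mem _ _ _ (by omega)) a (hsub.subset ha)
  refine ⟨⟨hf.1, ?_, hf.2.2.1, ?_⟩, rfl⟩
  · intro b hb
    exact bdd_blockShift hbr hM5 b (List.mem_reverse.1 hb)
  · simp only [List.length_reverse, blockShift, List.length_set]
    simpa using hf.2.2.2

theorem RightShift.mem_nexts {f g : Face} {j : ℕ} (h : RightShift f g j) (hf : FaceInv f) :
    g ∈ rightNexts f j := by
  obtain ⟨M, hM, rfl⟩ := h
  refine List.mem_map.2 ⟨M, List.mem_filter.2 ⟨?_, by simpa using hM⟩, rfl⟩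
  exact mem_subsetsList hM.2.2.1.subset (hf.1 _ (getD_mem _ _ _ (by have := hM.1; omega)))

theorem DownShift.mem_nexts {f g : Face} {j : ℕ} (h : DownShift f g j) (hf : FaceInv f) :
    g ∈ downNexts f j := by
  obtain ⟨M, hM, rfl⟩ := h
  refine List.mem_map.2 ⟨M, List.mem_filter.2 ⟨?_, by simpa using hM⟩, rfl⟩
  refine mem_subsetsList hM.2.2.1.subset ?_
  have : j < f.2.reverse.length := by have := hM.1; omega
  intro a ha
  exact hf.2.1 _ (List.mem_reverse.1 (getD_mem _ _ _ this)) a ha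

theorem mem_nexts_rightShift {f g : Face} {j : ℕ} (h : g ∈ rightNexts f j) :
    RightShift f g j := by
  obtain ⟨M, hM, rfl⟩ := List.mem_map.1 h
  exact ⟨M, by simpa using (List.mem_filter.1 hM).2, rfl⟩

theorem mem_nexts_downShift {f g : Face} {j : ℕ} (h : g ∈ downNexts f j) :
    DownShift f g j := by
  obtain ⟨M, hM, rfl⟩ := List.mem_map.1 h
  exact ⟨M, by simpa using (List.mem_filter.1 hM).2, rfl⟩

theorem self_mem_clo (nexts) : ∀ (fuel i : ℕ) (f : Face), f ∈ clo nexts fuel i f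
  | 0, _, _ => List.mem_singleton.2 rfl
  | fuel + 1, i, f => List.mem_append.2 (Or.inr (self_mem_clo nexts fuel (i + 1) f))

section Generic

variable {step : Face → Face → ℕ → Prop} {nexts : Face → ℕ → List Face}

theorem shiftSeq_of_lt {i i' : ℕ} {f g : Face} (h : ShiftSeq step i' f g) (hle : i ≤ i') :
    ShiftSeq step i f g := by
  cases h with
  | refl => exact ShiftSeq.refl i f
  | cons _ j _ g' _ hij hstep hrest =>
    exact ShiftSeq.cons i j _ g' _ (le_trans hle hij) hstep hrest

theorem clo_sound (Hsound : ∀ f g j, g ∈ nexts f j → step f g j) :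
    ∀ (fuel i : ℕ) (f g : Face), g ∈ clo nexts fuel i f → ShiftSeq step i f g
  | 0, i, f, g, h => by
      cases List.mem_singleton.1 h; exact ShiftSeq.refl i f
  | fuel + 1, i, f, g, h => by
      rcases List.mem_append.1 h with h | h
      · obtain ⟨g', hg', hgg⟩ := List.mem_flatMap.1 h
        exact ShiftSeq.cons i i f g' g le_rfl (Hsound f g' i hg')
          (clo_sound Hsound fuel (i + 1) g' g hgg)
      · exact shiftSeq_of_lt (clo_sound Hsound fuel (i + 1) f g h) (Nat.le_succ i)

theorem shiftSeq_inv (Hpres : ∀ f g j, step f g j → FaceInv f → FaceInv g)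
    {i : ℕ} {f g : Face} (h : ShiftSeq step i f g) (hf : FaceInv f) : FaceInv g := by
  induction h with
  | refl => exact hf
  | cons i' j' f' g' h' hij hstep hrest ih => exact ih (Hpres _ _ j' hstep hf)

theorem clo_complete
    (Hcomp : ∀ f g j, step f g j → FaceInv f → g ∈ nexts f j)
    (Hpres : ∀ f g j, step f g j → FaceInv f → FaceInv g)
    (Hj : ∀ f g j, step f g j → FaceInv f → j + 2 ≤ 4) :
    ∀ (fuel i : ℕ) (f g : Face), ShiftSeq step i f g → FaceInv f → 4 ≤ i + fuel →
      g ∈ clo nexts fuel i f := by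
  intro fuel
  induction fuel with
  | zero =>
    intro i f g h hf hle
    cases h with
    | refl => exact List.mem_singleton.2 rfl
    | cons _ j _ g' _ hij hstep hrest =>
      have := Hj _ _ j hstep hf; omega
  | succ fuel ih =>
    intro i f g h hf hle
    cases h with
    | refl => exact self_mem_clo nexts (fuel + 1) i f
    | cons _ j _ g' _ hij hstep hrest =>
      rcases eq_or_lt_of_le hij with rfl | hlt
      · refine List.mem_append.2 (Or.inl (List.mem_flatMap.2
          ⟨g', Hcomp _ _ i hstep hf, ih (i + 1) g' _ hrest (Hpres _ _ i hstep hf) (by omega)⟩))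
      · refine List.mem_append.2 (Or.inr (ih (i + 1) f _ ?_ hf (by omega)))
        exact ShiftSeq.cons (i + 1) j _ g' _ hlt hstep hrest

end Generic

theorem derivedList_sound {f g : Face} (h : g ∈ derivedList f) : IsDerivedFace f g := by
  obtain ⟨m, hm, hg⟩ := List.mem_flatMap.1 h
  exact ⟨m, clo_sound (fun _ _ _ => mem_nexts_rightShift) 4 0 f m hm,
    clo_sound (fun _ _ _ => mem_nexts_downShift) 4 0 m g hg⟩

theorem derivedList_complete {f g : Face} (h : IsDerivedFace f g) (hf : FaceInv f) :
    g ∈ derivedList f := by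
  obtain ⟨m, hr, hd⟩ := h
  have hIr : ∀ f g j, RightShift f g j → FaceInv f → FaceInv g := fun f g j h hf => (h.inv hf).1
  have hId : ∀ f g j, DownShift f g j → FaceInv f → FaceInv g := fun f g j h hf => (h.inv hf).1
  have hm : FaceInv m := shiftSeq_inv hIr hr hf
  refine List.mem_flatMap.2 ⟨m, ?_, ?_⟩
  · refine clo_complete (fun f g j h hf => h.mem_nexts hf) hIr
      (fun f g j h hf => ?_) 4 0 f m hr hf (by omega)
    · obtain ⟨M, hM, _⟩ := h
      have := hM.1
      have := hf.2.2.1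
      omega
  · refine clo_complete (fun f g j h hf => h.mem_nexts hf) hId
      (fun f g j h hf => ?_) 4 0 m g hd hm (by omega)
    · obtain ⟨M, hM, _⟩ := h
      have h1 := hM.1
      simp only [List.length_reverse] at h1
      have := hf.2.2.2
      omega

theorem dc5_to_dc {π : List (Finset ℕ)} (hb : Bdd π) (h : DC5 π) : DerivedConsecutive π := by
  intro j hj x h1 h2
  obtain ⟨b, hbmem, hxb⟩ := h2
  have : b < 5 := hb _ (getD_mem _ _ _ hj) b hbmem
  exact h j hj x (by omega) h1 ⟨b, hbmem, hxb⟩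

def words24 : List (List ℕ) :=
  [[1,2,3,4],[1,2,4,3],[1,3,2,4],[1,3,4,2],[1,4,2,3],[1,4,3,2],
   [2,1,3,4],[2,1,4,3],[2,3,1,4],[2,3,4,1],[2,4,1,3],[2,4,3,1],
   [3,1,2,4],[3,1,4,2],[3,2,1,4],[3,2,4,1],[3,4,1,2],[3,4,2,1],
   [4,1,2,3],[4,1,3,2],[4,2,1,3],[4,2,3,1],[4,3,1,2],[4,3,2,1]]

set_option synthInstance.maxSize 2000 in
theorem perm_mem_words24 : ∀ a < 5, ∀ b < 5, ∀ c < 5, ∀ d < 5,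
    ([a,b,c,d] : List ℕ).Perm [1,2,3,4] → [a,b,c,d] ∈ words24 := by decide

theorem permWord_mem_words24 (σ : Equiv.Perm (Fin 4)) : permWord 4 σ ∈ words24 := by
  have he : permWord 4 σ = [(σ 0 : ℕ) + 1, (σ 1 : ℕ) + 1, (σ 2 : ℕ) + 1, (σ 3 : ℕ) + 1] := by
    simp [permWord, List.ofFn_succ, show (Fin.succ 0 : Fin 4) = 1 from by decide,
      show (Fin.succ 1 : Fin 4) = 2 from by decide, show (Fin.succ 2 : Fin 4) = 3 from by decide,
      show ((0 : Fin 3).succ : Fin 4) = 1 from by decide]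
  have hp : (permWord 4 σ).Perm [1,2,3,4] := by
    have := σ.ofFn_comp_perm (fun i : Fin 4 => (i : ℕ) + 1)
    simpa [permWord, Function.comp] using this
  rw [he] at hp ⊢
  exact perm_mem_words24 _ (by omega) _ (by omega) _ (by omega) _ (by omega) hp

def pOf (v g : Fin 4 → Fin 4) (h1 : ∀ x, g (v x) = x := by decide)
    (h2 : ∀ x, v (g x) = x := by decide) : Equiv.Perm (Fin 4) := ⟨v, g, h1, h2⟩

theorem words24_perm : ∀ w ∈ words24, ∃ σ : Equiv.Perm (Fin 4), permWord 4 σ = w := by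
  intro w hw
  fin_cases hw
  · exact ⟨pOf ![0,1,2,3] ![0,1,2,3], by decide⟩
  · exact ⟨pOf ![0,1,3,2] ![0,1,3,2], by decide⟩
  · exact ⟨pOf ![0,2,1,3] ![0,2,1,3], by decide⟩
  · exact ⟨pOf ![0,2,3,1] ![0,3,1,2], by decide⟩
  · exact ⟨pOf ![0,3,1,2] ![0,2,3,1], by decide⟩
  · exact ⟨pOf ![0,3,2,1] ![0,3,2,1], by decide⟩
  · exact ⟨pOf ![1,0,2,3] ![1,0,2,3], by decide⟩
  · exact ⟨pOf ![1,0,3,2] ![1,0,3,2], by decide⟩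
  · exact ⟨pOf ![1,2,0,3] ![2,0,1,3], by decide⟩
  · exact ⟨pOf ![1,2,3,0] ![3,0,1,2], by decide⟩
  · exact ⟨pOf ![1,3,0,2] ![2,0,3,1], by decide⟩
  · exact ⟨pOf ![1,3,2,0] ![3,0,2,1], by decide⟩
  · exact ⟨pOf ![2,0,1,3] ![1,2,0,3], by decide⟩
  · exact ⟨pOf ![2,0,3,1] ![1,3,0,2], by decide⟩
  · exact ⟨pOf ![2,1,0,3] ![2,1,0,3], by decide⟩
  · exact ⟨pOf ![2,1,3,0] ![3,1,0,2], by decide⟩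
  · exact ⟨pOf ![2,3,0,1] ![2,3,0,1], by decide⟩
  · exact ⟨pOf ![2,3,1,0] ![3,2,0,1], by decide⟩
  · exact ⟨pOf ![3,0,1,2] ![1,2,3,0], by decide⟩
  · exact ⟨pOf ![3,0,2,1] ![1,3,2,0], by decide⟩
  · exact ⟨pOf ![3,1,0,2] ![2,1,3,0], by decide⟩
  · exact ⟨pOf ![3,1,2,0] ![3,1,2,0], by decide⟩
  · exact ⟨pOf ![3,2,0,1] ![2,3,1,0], by decide⟩
  · exact ⟨pOf ![3,2,1,0] ![3,2,1,0], by decide⟩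

def target : List Face :=
  [([{1},{2},{3},{4}],[{1,2,3,4}]),
   ([{1,2},{3},{4}],[{2,3},{1,4}]),
   ([{1,2},{3},{4}],[{2,3,4},{1}]),
   ([{1,2},{3},{4}],[{2},{1,3,4}]),
   ([{1,2,3},{4}],[{3,4},{2},{1}]),
   ([{1,2,3},{4}],[{3},{2,4},{1}]),
   ([{1,2,3},{4}],[{3},{2},{1,4}]),
   ([{2},{1,3},{4}],[{2,3,4},{1}]),
   ([{2},{1,3},{4}],[{2,3},{1,4}]),
   ([{1},{2,3},{4}],[{3,4},{1,2}]),
   ([{1},{2,3},{4}],[{3},{1,2,4}]),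
   ([{1,2,3,4}],[{4},{3},{2},{1}]),
   ([{3},{1,2,4}],[{3,4},{2},{1}]),
   ([{2,3},{1,4}],[{3,4},{2},{1}]),
   ([{2,3},{1,4}],[{3},{2,4},{1}]),
   ([{2},{1,3,4}],[{4},{2,3},{1}]),
   ([{2},{3},{1,4}],[{2,3,4},{1}]),
   ([{1},{2},{3,4}],[{4},{1,2,3}]),
   ([{1,2},{3,4}],[{4},{2,3},{1}]),
   ([{1,2},{3,4}],[{4},{2},{1,3}]),
   ([{1},{2,3,4}],[{4},{3},{1,2}]),
   ([{3},{1},{2,4}],[{3,4},{1,2}])]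

set_option maxRecDepth 40000 in
theorem words24_inv : ∀ w ∈ words24, FaceInv (wordFace w) := by decide

set_option maxRecDepth 40000 in
theorem big_check : ∀ w ∈ words24, ∀ f ∈ derivedList (wordFace w),
    (DC5 f.1 ∧ DC5 f.2) → f ∈ target := by decide

set_option maxRecDepth 40000 in
theorem target_sources : ∀ t ∈ target, ∃ w ∈ words24, t ∈ derivedList (wordFace w) := by decide

set_option maxRecDepth 40000 in
theorem target_props : ∀ t ∈ target, Bdd t.1 ∧ Bdd t.2 ∧ DC5 t.1 ∧ DC5 t.2 := by decide

end Aux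


/-- The associahedron term set K_4, consisting of the faces (p, q) of Δ_4 with both
p and q derived consecutive, has exactly 22 elements. -/
theorem assocTerms_card_4 : (AssocTerms 4).ncard = 22 := by
  have hset : AssocTerms 4 = ↑(target.toFinset) := by
    ext f
    simp only [AssocTerms, SUDiagonal, Set.mem_setOf_eq, Set.mem_sep_iff,
      List.coe_toFinset]
    constructor
    · rintro ⟨⟨σ, hder⟩, dc1, dc2⟩
      have hw := permWord_mem_words24 σ
      have hinv := words24_inv _ hw
      have hmem : f ∈ derivedList (wordFace (permWord 4 σ)) :=
        derivedList_complete (by rwa [stepFace_eq_wordFace] at hder) hinv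
      exact big_check _ hw f hmem
        ⟨fun j hj x _ h1 h2 => dc1 j hj x h1 h2, fun j hj x _ h1 h2 => dc2 j hj x h1 h2⟩
    · intro hf
      obtain ⟨w, hw, hder⟩ := target_sources f hf
      obtain ⟨σ, rfl⟩ := words24_perm w hw
      obtain ⟨b1, b2, d1, d2⟩ := target_props f hf
      exact ⟨⟨σ, by rw [stepFace_eq_wordFace]; exact derivedList_sound hder⟩,
        dc5_to_dc b1 d1, dc5_to_dc b2 d2⟩
  rw [hset, Set.ncard_coe_finset]
  decide
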